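/- For all positive integers m, n, p, and q, the identity \(\sum_{a=1-pn}^{pm}\sum_{b=1}^{qn}\binom{pm+qm-a+b-1}{pm-a}\binom{pn+qn+a-b-1}{qn-b}=\frac{pqn}{p+q}\binom{pm+qm+pn+qn}{pm+pn}\) holds (as an identity of rational numbers), where a ranges over the integers from 1-pn to pm. -/

import Mathlib

open Finset

/-- Parallel summation (hockey stick): `∑_{k=0}^{r} C(y+k, k) = C(y+r+1, r)`. -/
lemma par_sum_choose (y r : ℕ) :
    ∑ k ∈ Finset.range (r + 1), (y + k).choose k = (y + r + 1).choose r := by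
  have h1 : ∀ k, (y + k).choose k = (y + k).choose y := by
    intro k
    have := Nat.choose_symm (n := y + k) (k := y) (by omega)
    simpa using this
  simp_rw [h1]
  have h2 : ∑ x ∈ Finset.Icc y (y + r), x.choose y = (y + r + 1).choose (y + 1) :=
    Nat.sum_Icc_choose (y + r) y
  rw [show Finset.Icc y (y + r) = Finset.map ⟨fun k => y + k, add_right_injective y⟩
      (Finset.range (r + 1)) by
    ext x
    simp only [Finset.mem_Icc, Finset.mem_map, Finset.mem_range,
      Function.Embedding.coeFn_mk]
    constructor
    · rintro ⟨h1, h2⟩; exact ⟨x - y, by omega, by omega⟩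
    · rintro ⟨k, hk, rfl⟩; omega] at h2
  rw [Finset.sum_map] at h2
  simp only [Function.Embedding.coeFn_mk] at h2
  rw [h2]
  have h3 := Nat.choose_symm (n := y + r + 1) (k := y + 1) (by omega)
  have h4 : y + r + 1 - (y + 1) = r := by omega
  rw [h4] at h3
  exact h3.symm

/-- Convolution identity:
`∑_{i=0}^{r} C(x+i, i) * C(y+(r-i), r-i) = C(x+y+r+1, r)`. -/
lemma conv_choose (x : ℕ) : ∀ y r : ℕ,
    ∑ i ∈ Finset.range (r + 1), (x + i).choose i * (y + (r - i)).choose (r - i) =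
      (x + y + r + 1).choose r := by
  induction x with
  | zero =>
    intro y r
    simp only [Nat.zero_add, Nat.choose_self, one_mul, zero_add]
    rw [← Finset.sum_range_reflect]
    have hc : ∀ i ∈ Finset.range (r + 1),
        (y + (r - (r + 1 - 1 - i))).choose (r - (r + 1 - 1 - i)) = (y + i).choose i := by
      intro i hi
      rw [Finset.mem_range] at hi
      congr 1 <;> omega
    rw [Finset.sum_congr rfl hc, par_sum_choose]
  | succ x ih =>
    intro y r
    have hx : ∀ i, (x + 1 + i).choose i = ∑ t ∈ Finset.range (i + 1), (x + t).choose t := by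
      intro i
      rw [par_sum_choose x i]
      congr 1
      omega
    set F : ℕ → ℕ → ℕ := fun t i => (x + t).choose t * (y + (r - i)).choose (r - i) with hF
    calc ∑ i ∈ Finset.range (r + 1), (x + 1 + i).choose i * (y + (r - i)).choose (r - i)
        = ∑ i ∈ Finset.range (r + 1), ∑ t ∈ Finset.range (i + 1), F t i := by
          refine Finset.sum_congr rfl fun i _ => ?_
          rw [hx i, Finset.sum_mul]
      _ = ∑ i ∈ Finset.Ico 0 (r + 1), ∑ t ∈ Finset.Ico 0 (i + 1), F t i := by
          simp only [Finset.range_eq_Ico]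
      _ = ∑ t ∈ Finset.Ico 0 (r + 1), ∑ i ∈ Finset.Ico t (r + 1), F t i :=
          (Finset.sum_Ico_Ico_comm 0 (r + 1) F).symm
      _ = ∑ t ∈ Finset.range (r + 1), ∑ i ∈ Finset.Ico t (r + 1), F t i := by
          simp only [Finset.range_eq_Ico]
      _ = ∑ t ∈ Finset.range (r + 1),
            (x + t).choose t * ((y + 1) + (r - t)).choose (r - t) := by
          refine Finset.sum_congr rfl fun t ht => ?_
          rw [Finset.mem_range] at ht
          rw [hF]
          simp only
          rw [← Finset.mul_sum]
          congr 1
          -- ∑ i ∈ Ico t (r+1), C(y + (r-i), r-i) = C(y+1+(r-t), r-t)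
          have hmap : Finset.Ico t (r + 1) = Finset.map ⟨fun k => t + k, add_right_injective t⟩
              (Finset.range (r - t + 1)) := by
            ext z
            simp only [Finset.mem_Ico, Finset.mem_map, Finset.mem_range,
              Function.Embedding.coeFn_mk]
            constructor
            · rintro ⟨h1, h2⟩; exact ⟨z - t, by omega, by omega⟩
            · rintro ⟨k, hk, rfl⟩; omega
          rw [hmap, Finset.sum_map]
          simp only [Function.Embedding.coeFn_mk]
          rw [← Finset.sum_range_reflect]
          have hcong : ∀ k ∈ Finset.range (r - t + 1),
              (y + (r - (t + (r - t + 1 - 1 - k)))).choose (r - (t + (r - t + 1 - 1 - k)))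
                = (y + k).choose k := by
            intro k hk
            rw [Finset.mem_range] at hk
            congr 1 <;> omega
          rw [Finset.sum_congr rfl hcong, par_sum_choose]
          congr 1
          omega
      _ = (x + (y + 1) + r + 1).choose r := ih (y + 1) r
      _ = (x + 1 + y + r + 1).choose r := by congr 1; omega

/-- Reindex a sum over an integer interval `Icc (U - n + 1) U` as a range sum, descending. -/
lemma sum_Icc_int_rev (U : ℤ) (n : ℕ) (f : ℤ → ℚ) :
    ∑ a ∈ Finset.Icc (U - n + 1) U, f a = ∑ i ∈ Finset.range n, f (U - i) := by
  refine Finset.sum_nbij' (fun a => (U - a).toNat) (fun i => U - (i : ℤ)) ?_ ?_ ?_ ?_ ?_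
  · intro a ha
    rw [Finset.mem_Icc] at ha
    rw [Finset.mem_range]
    omega
  · intro i hi
    rw [Finset.mem_range] at hi
    rw [Finset.mem_Icc]
    omega
  · intro a ha
    rw [Finset.mem_Icc] at ha
    omega
  · intro i hi
    rw [Finset.mem_range] at hi
    omega
  · intro a ha
    rw [Finset.mem_Icc] at ha
    congr 1
    omega

/-- The key summation identity with the four products generalized to arbitrary naturals. -/
lemma main_sum (A B C D : ℕ) (hP : 0 < A + C) (hD : 0 < D) :
    ∑ a ∈ Finset.Icc (1 - (C : ℤ)) (A : ℤ), ∑ b ∈ Finset.Icc (1 : ℤ) (D : ℤ),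
      ((Nat.choose ((A : ℤ) + B - a + b - 1).toNat ((A : ℤ) - a).toNat : ℚ) *
        (Nat.choose ((C : ℤ) + D + a - b - 1).toNat ((D : ℤ) - b).toNat : ℚ)) =
    (D : ℚ) * (Nat.choose (A + B + C + D - 1) (A + C - 1) : ℚ) := by
  set P : ℕ := A + C with hPdef
  set Q : ℕ := B + D with hQdef
  have h1 : Finset.Icc (1 - (C : ℤ)) (A : ℤ) = Finset.Icc ((A : ℤ) - P + 1) (A : ℤ) := by
    congr 1
    have : (P : ℤ) = (A : ℤ) + C := by push_cast [hPdef]; ring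
    omega
  have h2 : Finset.Icc (1 : ℤ) (D : ℤ) = Finset.Icc ((D : ℤ) - D + 1) (D : ℤ) := by
    congr 1
    omega
  rw [h1, sum_Icc_int_rev ((A : ℤ)) P]
  have hinner : ∀ i ∈ Finset.range P,
      (∑ b ∈ Finset.Icc (1 : ℤ) (D : ℤ),
        ((Nat.choose ((A : ℤ) + B - ((A : ℤ) - i) + b - 1).toNat
            ((A : ℤ) - ((A : ℤ) - i)).toNat : ℚ) *
          (Nat.choose ((C : ℤ) + D + ((A : ℤ) - i) - b - 1).toNat ((D : ℤ) - b).toNat : ℚ))) =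
      ∑ j ∈ Finset.range D,
        ((Nat.choose ((Q - 1 - j) + i) i : ℚ) *
          (Nat.choose (j + (P - 1 - i)) (P - 1 - i) : ℚ)) := by
    intro i hi
    rw [Finset.mem_range] at hi
    rw [h2, sum_Icc_int_rev ((D : ℤ)) D]
    refine Finset.sum_congr rfl fun j hj => ?_
    rw [Finset.mem_range] at hj
    have hPi : P = A + C := hPdef
    have hQi : Q = B + D := hQdef
    have e1 : ((A : ℤ) + B - ((A : ℤ) - i) + ((D : ℤ) - j) - 1).toNat = (Q - 1 - j) + i := by
      omega
    have e2 : ((A : ℤ) - ((A : ℤ) - i)).toNat = i := by omega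
    have e3 : ((C : ℤ) + D + ((A : ℤ) - i) - ((D : ℤ) - j) - 1).toNat = j + (P - 1 - i) := by
      omega
    have e4 : ((D : ℤ) - ((D : ℤ) - j)).toNat = j := by omega
    rw [e1, e2, e3, e4]
    congr 2
    have := Nat.choose_symm (n := j + (P - 1 - i)) (k := P - 1 - i) (by omega)
    have h5 : j + (P - 1 - i) - (P - 1 - i) = j := by omega
    rw [h5] at this
    exact this
  rw [Finset.sum_congr rfl hinner, Finset.sum_comm]
  have hcollapse : ∀ j ∈ Finset.range D,
      (∑ i ∈ Finset.range P,
        ((Nat.choose ((Q - 1 - j) + i) i : ℚ) *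
          (Nat.choose (j + (P - 1 - i)) (P - 1 - i) : ℚ))) =
      (Nat.choose (P + Q - 1) (P - 1) : ℚ) := by
    intro j hj
    rw [Finset.mem_range] at hj
    have key := conv_choose (Q - 1 - j) j (P - 1)
    have hP1 : P - 1 + 1 = P := by omega
    rw [hP1] at key
    have harg : Q - 1 - j + j + (P - 1) + 1 = P + Q - 1 := by omega
    rw [harg] at key
    calc ∑ i ∈ Finset.range P,
          ((Nat.choose ((Q - 1 - j) + i) i : ℚ) *
            (Nat.choose (j + (P - 1 - i)) (P - 1 - i) : ℚ))
        = ((∑ i ∈ Finset.range P,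
            Nat.choose ((Q - 1 - j) + i) i * Nat.choose (j + (P - 1 - i)) (P - 1 - i) : ℕ) : ℚ)
          := by push_cast; rfl
      _ = (Nat.choose (P + Q - 1) (P - 1) : ℚ) := by rw [key]
  rw [Finset.sum_congr rfl hcollapse, Finset.sum_const, Finset.card_range, nsmul_eq_mul]
  rw [show A + B + C + D - 1 = P + Q - 1 from by omega]

theorem guo_zeng_chu_vandermonde_sum (m n p q : ℕ) (hm : 0 < m) (hn : 0 < n)
    (hp : 0 < p) (hq : 0 < q) :
    ∑ a ∈ Finset.Icc (1 - (p * n : ℤ)) ((p * m : ℤ)), ∑ b ∈ Finset.Icc (1 : ℤ) ((q * n : ℤ)),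
      ((Nat.choose ((p * m : ℤ) + q * m - a + b - 1).toNat ((p * m : ℤ) - a).toNat : ℚ) *
        (Nat.choose ((p * n : ℤ) + q * n + a - b - 1).toNat ((q * n : ℤ) - b).toNat : ℚ)) =
    (p * q * n : ℚ) / (p + q) *
      (Nat.choose (p * m + q * m + p * n + q * n) (p * m + p * n) : ℚ) := by
  have c1 : ((p : ℤ) * (m : ℤ)) = ((p * m : ℕ) : ℤ) := by push_cast; ring
  have c2 : ((q : ℤ) * (m : ℤ)) = ((q * m : ℕ) : ℤ) := by push_cast; ring
  have c3 : ((p : ℤ) * (n : ℤ)) = ((p * n : ℕ) : ℤ) := by push_cast; ring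
  have c4 : ((q : ℤ) * (n : ℤ)) = ((q * n : ℕ) : ℤ) := by push_cast; ring
  simp only [c1, c2, c3, c4]
  rw [main_sum (p * m) (q * m) (p * n) (q * n) (by positivity) (by positivity)]
  -- now pure rational arithmetic with nat binomials
  set A : ℕ := p * m
  set B : ℕ := q * m
  set C : ℕ := p * n
  set D : ℕ := q * n
  have hNP : (A + B + C + D) * Nat.choose (A + B + C + D - 1) (A + C - 1)
      = (A + C) * Nat.choose (A + B + C + D) (A + C) := by
    have h := Nat.add_one_mul_choose_eq (A + B + C + D - 1) (A + C - 1)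
    have h1 : A + B + C + D - 1 + 1 = A + B + C + D := by
      have : 0 < A := by positivity
      omega
    have h2 : A + C - 1 + 1 = A + C := by
      have : 0 < A := by positivity
      omega
    rw [h1, h2] at h
    rw [h]
    ring
  have hcast : ((A + B + C + D : ℕ) : ℚ) * (Nat.choose (A + B + C + D - 1) (A + C - 1) : ℚ)
      = ((A + C : ℕ) : ℚ) * (Nat.choose (A + B + C + D) (A + C) : ℚ) := by
    exact_mod_cast congrArg (Nat.cast : ℕ → ℚ) hNP
  have hpq : ((p : ℚ) + q) ≠ 0 := by positivity
  have hN0 : ((A + B + C + D : ℕ) : ℚ) ≠ 0 := by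
    have hA : 0 < A := by positivity
    have h : (0 : ℚ) < ((A + B + C + D : ℕ) : ℚ) := by exact_mod_cast (by omega : 0 < A + B + C + D)
    linarith
  have hDPQ : (D : ℚ) * ((p : ℚ) + q) * ((A + C : ℕ) : ℚ)
      = ((p : ℚ) * q * n) * ((A + B + C + D : ℕ) : ℚ) := by
    push_cast [show A = p * m from rfl, show B = q * m from rfl,
      show C = p * n from rfl, show D = q * n from rfl]
    ring
  rw [div_mul_eq_mul_div, eq_div_iff hpq]
  -- goal : D * choose (N-1) (P-1) * (p+q) = p*q*n * choose N P
  have hmain : ((D : ℚ) * (Nat.choose (A + B + C + D - 1) (A + C - 1) : ℚ) * ((p : ℚ) + q))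
      * ((A + B + C + D : ℕ) : ℚ)
      = (((p : ℚ) * q * n) * (Nat.choose (A + B + C + D) (A + C) : ℚ))
        * ((A + B + C + D : ℕ) : ℚ) := by
    calc ((D : ℚ) * (Nat.choose (A + B + C + D - 1) (A + C - 1) : ℚ) * ((p : ℚ) + q))
          * ((A + B + C + D : ℕ) : ℚ)
        = ((D : ℚ) * ((p : ℚ) + q)) * (((A + B + C + D : ℕ) : ℚ)
            * (Nat.choose (A + B + C + D - 1) (A + C - 1) : ℚ)) := by ring
      _ = ((D : ℚ) * ((p : ℚ) + q)) * (((A + C : ℕ) : ℚ)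
            * (Nat.choose (A + B + C + D) (A + C) : ℚ)) := by rw [hcast]
      _ = ((D : ℚ) * ((p : ℚ) + q) * ((A + C : ℕ) : ℚ))
            * (Nat.choose (A + B + C + D) (A + C) : ℚ) := by ring
      _ = (((p : ℚ) * q * n) * ((A + B + C + D : ℕ) : ℚ))
            * (Nat.choose (A + B + C + D) (A + C) : ℚ) := by rw [hDPQ]
      _ = (((p : ℚ) * q * n) * (Nat.choose (A + B + C + D) (A + C) : ℚ))
            * ((A + B + C + D : ℕ) : ℚ) := by ring
  have := mul_right_cancel₀ hN0 hmain
  push_cast at this ⊢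
  linarith [this]
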